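/- The Hausdorff dimension of E_*(τ) = {x ∈ R^2 : |qx - r|_∞ ≤ |q|_∞^{-τ} for infinitely many (q,r) ∈ Z[i] × Z[i]} is at most min(4/(1+τ), 2) for τ > 1. -/

import Mathlib

open MeasureTheory Complex GaussianInt

noncomputable def gnorm (q : GaussianInt) : ℝ := max |(q.re : ℝ)| |(q.im : ℝ)|
noncomputable def snorm2 (z : ℂ) : ℝ := max |z.re| |z.im|
noncomputable def ec (t : ℝ) : ℂ := Complex.exp (-2 * Real.pi * Complex.I * t)
def inn (ξ x : ℂ) : ℝ := ξ.re * x.re + ξ.im * x.im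
def unitSquare : Set ℂ := {z : ℂ | z.re ∈ Set.Icc (0:ℝ) 1 ∧ z.im ∈ Set.Icc (0:ℝ) 1}
noncomputable def fcoeff (f : ℂ → ℂ) (ξ : ℂ) : ℂ := ∫ x in unitSquare, ec (inn ξ x) * f x
noncomputable def ftr (f : ℂ → ℂ) (ξ : ℂ) : ℂ := ∫ x : ℂ, ec (inn ξ x) * f x
noncomputable def Phi (φ : ℂ → ℝ) (ε : ℝ) (x : ℂ) : ℝ :=
  ∑' r : GaussianInt, ε⁻¹ ^ 2 * φ (ε⁻¹ • (x - toComplex r))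
noncomputable def Z2 (M : ℝ) : Set GaussianInt := {q | M / 2 < gnorm q ∧ gnorm q ≤ M}
noncomputable def FM (φ : ℂ → ℝ) (τ M : ℝ) (x : ℂ) : ℝ :=
  ((Z2 M).ncard : ℝ)⁻¹ * ∑' q : (Z2 M), Phi φ (M ^ (-τ) / 2) (toComplex q.1 * x)
noncomputable def PM (M : ℝ) : Set GaussianInt := {q | Prime q ∧ M / 2 < gnorm q ∧ gnorm q ≤ M}
noncomputable def FMP (φ : ℂ → ℝ) (τ M : ℝ) (x : ℂ) : ℝ :=
  ((PM M).ncard : ℝ)⁻¹ * ∑' q : (PM M), Phi φ (M ^ (-τ) / 2) (toComplex q.1 * x)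
noncomputable def mhat (μ : Measure ℂ) (ξ : ℂ) : ℂ := ∫ x, ec (inn ξ x) ∂μ


open Filter
open scoped ENNReal Topology

lemma gnorm_nonneg (q : GaussianInt) : 0 ≤ gnorm q :=
  le_trans (abs_nonneg _) (le_max_left _ _)

lemma gnorm_eq_snorm2 (q : GaussianInt) : gnorm q = snorm2 (toComplex q) := by
  simp [gnorm, snorm2]

lemma snorm2_le_abs (z : ℂ) : snorm2 z ≤ ‖z‖ :=
  max_le (Complex.abs_re_le_norm z) (Complex.abs_im_le_norm z)

lemma abs_le_sqrt2_snorm2 (z : ℂ) : ‖z‖ ≤ Real.sqrt 2 * snorm2 z :=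
  Complex.norm_le_sqrt_two_mul_max z

lemma gnorm_le_abs (q : GaussianInt) : gnorm q ≤ ‖toComplex q‖ := by
  rw [gnorm_eq_snorm2]; exact snorm2_le_abs _

lemma abs_le_sqrt2_gnorm (q : GaussianInt) :
    ‖toComplex q‖ ≤ Real.sqrt 2 * gnorm q := by
  rw [gnorm_eq_snorm2]; exact abs_le_sqrt2_snorm2 _

lemma one_le_gnorm {q : GaussianInt} (hq : q ≠ 0) : 1 ≤ gnorm q := by
  rcases ne_or_eq q.re 0 with h | h
  · refine le_trans ?_ (le_max_left _ _)
    rw [← Int.cast_abs]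
    exact_mod_cast Int.one_le_abs h
  · refine le_trans ?_ (le_max_right _ _)
    rw [← Int.cast_abs]
    refine mod_cast Int.one_le_abs fun h2 => hq ?_
    exact Zsqrtd.ext h h2

lemma gnorm_zero : gnorm 0 = 0 := by simp [gnorm]

/-- The box of Gaussian integers with `gnorm ≤ K` is finite. -/
lemma box_finite (K : ℝ) : {z : GaussianInt | gnorm z ≤ K}.Finite := by
  have : {z : GaussianInt | gnorm z ≤ K} ⊆
      (fun z : GaussianInt => (z.re, z.im)) ⁻¹'
        (Set.Icc (-⌈K⌉) ⌈K⌉ ×ˢ Set.Icc (-⌈K⌉) ⌈K⌉) := by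
    intro z hz
    have h1 : |(z.re : ℝ)| ≤ K := le_trans (le_max_left _ _) hz
    have h2 : |(z.im : ℝ)| ≤ K := le_trans (le_max_right _ _) hz
    have h1' : |z.re| ≤ ⌈K⌉ := by
      have := h1.trans (Int.le_ceil K); rw [← Int.cast_abs] at this; exact_mod_cast this
    have h2' : |z.im| ≤ ⌈K⌉ := by
      have := h2.trans (Int.le_ceil K); rw [← Int.cast_abs] at this; exact_mod_cast this
    constructor
    · exact ⟨neg_le_of_abs_le h1', le_of_abs_le h1'⟩
    · exact ⟨neg_le_of_abs_le h2', le_of_abs_le h2'⟩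
  refine Set.Finite.subset (Set.Finite.preimage ?_ ((Set.finite_Icc _ _).prod (Set.finite_Icc _ _))) this
  intro a _ b _ hab
  exact Zsqrtd.ext (congrArg Prod.fst hab) (congrArg Prod.snd hab)


instance : Countable GaussianInt := by
  exact Function.Injective.countable (f := fun z : GaussianInt => (z.re, z.im))
    (fun a b hab => Zsqrtd.ext (congrArg Prod.fst hab) (congrArg Prod.snd hab))

lemma box_card (K : ℝ) (hK : 1 ≤ K) :
    (((box_finite K).toFinset.card : ℝ)) ≤ 25 * K ^ 2 := by
  have hinj : Set.InjOn (fun z : GaussianInt => (z.re, z.im))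
      ((box_finite K).toFinset : Set GaussianInt) := fun a _ b _ hab =>
    Zsqrtd.ext (congrArg Prod.fst hab) (congrArg Prod.snd hab)
  have hmaps : ∀ z ∈ (box_finite K).toFinset,
      (fun z : GaussianInt => (z.re, z.im)) z ∈
        Finset.Icc ((-⌈K⌉, -⌈K⌉) : ℤ × ℤ) (⌈K⌉, ⌈K⌉) := by
    intro z hz
    rw [Set.Finite.mem_toFinset] at hz
    have h1 : |(z.re : ℝ)| ≤ K := le_trans (le_max_left _ _) hz
    have h2 : |(z.im : ℝ)| ≤ K := le_trans (le_max_right _ _) hz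
    have h1' : |z.re| ≤ ⌈K⌉ := by
      have := h1.trans (Int.le_ceil K); rw [← Int.cast_abs] at this; exact_mod_cast this
    have h2' : |z.im| ≤ ⌈K⌉ := by
      have := h2.trans (Int.le_ceil K); rw [← Int.cast_abs] at this; exact_mod_cast this
    rw [Finset.mem_Icc]
    exact ⟨⟨neg_le_of_abs_le h1', neg_le_of_abs_le h2'⟩,
      ⟨le_of_abs_le h1', le_of_abs_le h2'⟩⟩
  have hcard := Finset.card_le_card_of_injOn _ hmaps hinj
  have hcc : (Finset.Icc ((-⌈K⌉, -⌈K⌉) : ℤ × ℤ) (⌈K⌉, ⌈K⌉)).card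
      = (2 * ⌈K⌉ + 1).toNat * (2 * ⌈K⌉ + 1).toNat := by
    rw [Finset.card_Icc_prod]
    simp [Int.card_Icc]
    ring_nf
  have hm : ((2 * ⌈K⌉ + 1).toNat : ℝ) ≤ 5 * K := by
    have h1 : (⌈K⌉ : ℝ) ≤ K + 1 := le_of_lt (Int.ceil_lt_add_one K)
    have h0 : (0:ℤ) ≤ 2 * ⌈K⌉ + 1 := by
      have h2 : (1:ℤ) ≤ ⌈K⌉ := by
        have := Int.ceil_mono hK; simpa using this
      linarith
    have he : ((2 * ⌈K⌉ + 1).toNat : ℝ) = 2 * (⌈K⌉:ℝ) + 1 := by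
      rw [← Int.cast_natCast, Int.toNat_of_nonneg h0]; push_cast; ring
    rw [he]; nlinarith
  calc ((box_finite K).toFinset.card : ℝ)
      ≤ ((2 * ⌈K⌉ + 1).toNat : ℝ) * ((2 * ⌈K⌉ + 1).toNat : ℝ) := by
        rw [← Nat.cast_mul, ← hcc]; exact_mod_cast hcard
    _ ≤ (5 * K) * (5 * K) := by
        refine mul_le_mul hm hm (Nat.cast_nonneg _) (by linarith)
    _ = 25 * K ^ 2 := by ring


def gEquiv : GaussianInt ≃ ℤ × ℤ where
  toFun z := (z.re, z.im)
  invFun p := ⟨p.1, p.2⟩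
  left_inv z := rfl
  right_inv p := rfl

noncomputable def W (p : ℝ) (a : ℤ) : ℝ≥0∞ :=
  if a = 0 then 1 else ENNReal.ofReal (|(a : ℝ)| ^ (-p))

lemma W_tsum_ne_top {p : ℝ} (hp : 1 < p) : ∑' a : ℤ, W p a ≠ ∞ := by
  have hb : ∀ a : ℤ, W p a ≤ (if a = 0 then (1:ℝ≥0∞) else 0) + ENNReal.ofReal (|(a:ℝ)| ^ (-p)) := by
    intro a
    by_cases h : a = 0
    · simp [W, h]
    · simp [W, h]
  refine ne_top_of_le_ne_top ?_ (ENNReal.tsum_le_tsum hb)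
  rw [ENNReal.tsum_add]
  have h1 : ∑' a : ℤ, (if a = 0 then (1:ℝ≥0∞) else 0) = 1 := tsum_ite_eq 0 1
  have h2 : ∑' a : ℤ, ENNReal.ofReal (|(a:ℝ)| ^ (-p))
      = ENNReal.ofReal (∑' a : ℤ, |(a:ℝ)| ^ (-p)) :=
    (ENNReal.ofReal_tsum_of_nonneg (fun a => Real.rpow_nonneg (abs_nonneg _) _)
      (Real.summable_abs_int_rpow hp)).symm
  rw [h1, h2]
  exact ENNReal.add_ne_top.2 ⟨ENNReal.one_ne_top, ENNReal.ofReal_ne_top⟩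

lemma key_sum {e : ℝ} (he : e < -2) :
    ∑' q : GaussianInt, (if 1 ≤ gnorm q then ENNReal.ofReal (gnorm q ^ e) else 0) ≠ ∞ := by
  set p : ℝ := -e / 2 with hp
  have hp1 : 1 < p := by rw [hp]; linarith
  have hp0 : 0 < p := lt_trans one_pos hp1
  have hbound : ∀ q : GaussianInt,
      (if 1 ≤ gnorm q then ENNReal.ofReal (gnorm q ^ e) else 0) ≤ W p q.re * W p q.im := by
    intro q
    by_cases h : 1 ≤ gnorm q
    · rw [if_pos h]
      have key : ∀ (a b : ℤ), 1 ≤ max |(a:ℝ)| |(b:ℝ)| →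
          ENNReal.ofReal ((max |(a:ℝ)| |(b:ℝ)|) ^ e) ≤ W p a * W p b := by
        intro a b hab
        by_cases ha : a = 0
        · by_cases hb : b = 0
          · exfalso; rw [ha, hb] at hab; norm_num at hab
          · have hm : max |((a:ℤ):ℝ)| |(b:ℝ)| = |(b:ℝ)| := by
              rw [ha]; simp
            rw [hm, W, W, if_pos ha, if_neg hb, one_mul]
            refine ENNReal.ofReal_le_ofReal (Real.rpow_le_rpow_of_exponent_le ?_ (by linarith))
            rw [hm] at hab; exact hab
        · by_cases hb : b = 0
          · have hm : max |(a:ℝ)| |((b:ℤ):ℝ)| = |(a:ℝ)| := by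
              rw [hb]; simp
            rw [hm, W, W, if_neg ha, if_pos hb, mul_one]
            refine ENNReal.ofReal_le_ofReal (Real.rpow_le_rpow_of_exponent_le ?_ (by linarith))
            rw [hm] at hab; exact hab
          · -- both nonzero
            have ha' : (0:ℝ) < |(a:ℝ)| := by
              simp only [abs_pos]; exact_mod_cast ha
            have hb' : (0:ℝ) < |(b:ℝ)| := by
              simp only [abs_pos]; exact_mod_cast hb
            set m := max |(a:ℝ)| |(b:ℝ)| with hmdef
            have hm0 : 0 < m := lt_of_lt_of_le one_pos hab
            have hsq : m ^ (2:ℝ) = m * m := by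
              rw [show (2:ℝ) = (1:ℝ)+1 by norm_num, Real.rpow_add hm0, Real.rpow_one]
            have hprod : |(a:ℝ)| * |(b:ℝ)| ≤ m ^ (2:ℝ) := by
              rw [hsq]
              exact mul_le_mul (le_max_left _ _) (le_max_right _ _) hb'.le hm0.le
            have h1 : m ^ e = (m ^ (2:ℝ)) ^ (-p) := by
              rw [← Real.rpow_mul hm0.le]
              congr 1
              rw [hp]; ring
            have h2 : (m ^ (2:ℝ)) ^ (-p) ≤ (|(a:ℝ)| * |(b:ℝ)|) ^ (-p) :=
              Real.rpow_le_rpow_of_nonpos (mul_pos ha' hb') hprod (by linarith)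
            have h3 : (|(a:ℝ)| * |(b:ℝ)|) ^ (-p) = |(a:ℝ)| ^ (-p) * |(b:ℝ)| ^ (-p) :=
              Real.mul_rpow ha'.le hb'.le
            rw [W, W, if_neg ha, if_neg hb, ← ENNReal.ofReal_mul (Real.rpow_nonneg ha'.le _)]
            refine ENNReal.ofReal_le_ofReal ?_
            rw [← h3]
            exact h1 ▸ h2
      have h' : 1 ≤ max |((q.re : ℤ):ℝ)| |((q.im : ℤ):ℝ)| := h
      exact key q.re q.im h'
    · rw [if_neg h]; exact zero_le
  refine ne_top_of_le_ne_top ?_ (ENNReal.tsum_le_tsum hbound)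
  have heq : ∑' q : GaussianInt, W p q.re * W p q.im
      = ∑' ab : ℤ × ℤ, W p ab.1 * W p ab.2 :=
    Equiv.tsum_eq gEquiv (fun ab : ℤ × ℤ => W p ab.1 * W p ab.2)
  rw [heq, show (∑' ab : ℤ × ℤ, W p ab.1 * W p ab.2)
      = ∑' a : ℤ, ∑' b : ℤ, W p a * W p b from ENNReal.tsum_prod (f := fun a b => W p a * W p b)]
  simp_rw [ENNReal.tsum_mul_left]
  rw [ENNReal.tsum_mul_right]
  exact ENNReal.mul_ne_top (W_tsum_ne_top hp1) (W_tsum_ne_top hp1)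


def Sx (τ : ℝ) (x : ℂ) : Set (GaussianInt × GaussianInt) :=
  {p | snorm2 (toComplex p.1 * x - toComplex p.2) ≤ gnorm p.1 ^ (-τ)}

lemma gnorm_pos {q : GaussianInt} (hq : 1 ≤ gnorm q) : (0:ℝ) < gnorm q :=
  lt_of_lt_of_le one_pos hq

lemma ne_zero_of_one_le_gnorm {q : GaussianInt} (hq : 1 ≤ gnorm q) : q ≠ 0 := by
  intro h; rw [h, gnorm_zero] at hq; linarith

lemma pair_bound {τ : ℝ} (hτ : 0 < τ) {x : ℂ} {p : GaussianInt × GaussianInt}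
    (hp : p ∈ Sx τ x) (hq1 : 1 ≤ gnorm p.1) :
    gnorm p.2 ≤ Real.sqrt 2 * (‖x‖ + 1) * gnorm p.1 ∧
    dist x (toComplex p.2 / toComplex p.1) ≤ Real.sqrt 2 * gnorm p.1 ^ (-(1+τ)) := by
  obtain ⟨q, r⟩ := p
  simp only [Sx, Set.mem_setOf_eq] at hp
  dsimp only at hq1 hp ⊢
  have hqpos : (0:ℝ) < gnorm q := gnorm_pos hq1
  have hs2 : (0:ℝ) ≤ Real.sqrt 2 := Real.sqrt_nonneg 2
  have h1s2 : (1:ℝ) ≤ Real.sqrt 2 := by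
    rw [show (1:ℝ) = Real.sqrt 1 from (Real.sqrt_one).symm]
    exact Real.sqrt_le_sqrt (by norm_num)
  have habs : ‖toComplex q * x - toComplex r‖
      ≤ Real.sqrt 2 * gnorm q ^ (-τ) :=
    le_trans (abs_le_sqrt2_snorm2 _) (by
      exact mul_le_mul_of_nonneg_left hp hs2)
  have hρ1 : gnorm q ^ (-τ) ≤ 1 :=
    Real.rpow_le_one_of_one_le_of_nonpos hq1 (by linarith)
  have habs1 : ‖toComplex q * x - toComplex r‖ ≤ Real.sqrt 2 := by
    calc ‖toComplex q * x - toComplex r‖ ≤ Real.sqrt 2 * gnorm q ^ (-τ) := habs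
      _ ≤ Real.sqrt 2 * 1 := by nlinarith
      _ = Real.sqrt 2 := mul_one _
  constructor
  · calc gnorm r ≤ ‖toComplex r‖ := gnorm_le_abs r
      _ = ‖toComplex q * x - (toComplex q * x - toComplex r)‖ := by ring_nf
      _ ≤ ‖toComplex q * x‖ + ‖toComplex q * x - toComplex r‖ := by
          simpa using
            norm_sub_le (toComplex q * x) (toComplex q * x - toComplex r)
      _ ≤ Real.sqrt 2 * gnorm q * ‖x‖ + Real.sqrt 2 := by
          rw [norm_mul]
          exact add_le_add (mul_le_mul_of_nonneg_right (abs_le_sqrt2_gnorm q)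
            (norm_nonneg x)) habs1
      _ ≤ Real.sqrt 2 * (‖x‖ + 1) * gnorm q := by nlinarith [norm_nonneg x]
  · have hq0 : toComplex q ≠ 0 := by
      rw [Ne, toComplex_eq_zero]; exact ne_zero_of_one_le_gnorm hq1
    have hxy : x - toComplex r / toComplex q = (toComplex q * x - toComplex r) / toComplex q := by
      field_simp
    rw [Complex.dist_eq, hxy, norm_div]
    have hdiv : ‖toComplex q * x - toComplex r‖ / ‖toComplex q‖
        ≤ Real.sqrt 2 * gnorm q ^ (-τ) / gnorm q :=
      div_le_div₀ (by positivity) habs hqpos (gnorm_le_abs q)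
    refine le_trans hdiv (le_of_eq ?_)
    rw [mul_div_assoc]
    congr 1
    rw [show gnorm q ^ (-τ) / gnorm q = gnorm q ^ (-τ) / gnorm q ^ (1:ℝ) by rw [Real.rpow_one],
      ← Real.rpow_sub hqpos]
    congr 1; ring

lemma exists_large_q {τ : ℝ} (hτ : 0 < τ) {x : ℂ} (hx : (Sx τ x).Infinite) (N : ℝ) :
    ∃ p ∈ Sx τ x, N ≤ gnorm p.1 := by
  by_contra hcon
  push_neg at hcon
  apply hx
  set N' : ℝ := max N 1 with hN'
  have hN'1 : (1:ℝ) ≤ N' := le_max_right _ _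
  have hK : (0:ℝ) ≤ Real.sqrt 2 * (‖x‖ + 1) * N' := by
    positivity
  have hsub : Sx τ x ⊆ {z : GaussianInt | gnorm z ≤ N'} ×ˢ
      {z : GaussianInt | gnorm z ≤ Real.sqrt 2 * (‖x‖ + 1) * N'} := by
    intro p hp
    have hq : gnorm p.1 < N := hcon p hp
    have hq' : gnorm p.1 ≤ N' := le_trans hq.le (le_max_left _ _)
    refine ⟨hq', ?_⟩
    by_cases h0 : p.1 = 0
    · -- then p.2 = 0
      simp only [Sx, Set.mem_setOf_eq, h0] at hp
      rw [gnorm_zero] at hp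
      rw [Real.zero_rpow (by linarith : -τ ≠ 0)] at hp
      simp only [toComplex_zero, zero_mul, zero_sub] at hp
      have : gnorm p.2 ≤ 0 := by
        rw [gnorm_eq_snorm2]
        refine le_trans (le_of_eq ?_) hp
        simp [snorm2, abs_neg]
      exact le_trans this hK
    · have h1 := (pair_bound hτ hp (one_le_gnorm h0)).1
      calc gnorm p.2 ≤ Real.sqrt 2 * (‖x‖ + 1) * gnorm p.1 := h1
        _ ≤ Real.sqrt 2 * (‖x‖ + 1) * N' := by
            refine mul_le_mul_of_nonneg_left (le_trans hq.le (le_max_left _ _)) (by positivity)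
  exact Set.Finite.subset ((box_finite N').prod (box_finite _)) hsub


lemma sqrt2_pos : (0:ℝ) < Real.sqrt 2 := Real.sqrt_pos.mpr (by norm_num)
lemma one_le_sqrt2 : (1:ℝ) ≤ Real.sqrt 2 := by
  rw [show (1:ℝ) = Real.sqrt 1 from (Real.sqrt_one).symm]
  exact Real.sqrt_le_sqrt (by norm_num)

lemma ediam_closedBall_le (c : ℂ) (ρ : ℝ) :
    Metric.ediam (Metric.closedBall c ρ) ≤ ENNReal.ofReal (2 * ρ) := by
  rcases le_or_gt 0 ρ with h | h
  · refine Metric.ediam_le_of_forall_dist_le ?_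
    intro a ha b hb
    rw [Metric.mem_closedBall] at ha hb
    calc dist a b ≤ dist a c + dist c b := dist_triangle _ _ _
      _ ≤ ρ + ρ := add_le_add ha (by rwa [dist_comm])
      _ = 2 * ρ := by ring
  · rw [Metric.closedBall_eq_empty.mpr h, Metric.ediam_empty]
    exact zero_le

set_option maxHeartbeats 1000000 in
lemma main_zero {τ s : ℝ} (hτ : 1 < τ) (hs4 : 4 < (1+τ) * s) (hs0 : 0 < s) (R : ℕ) :
    μH[s] ({x : ℂ | (Sx τ x).Infinite} ∩ Metric.closedBall 0 R) = 0 := by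
  have hτ0 : (0:ℝ) < τ := by linarith
  set C1 : ℝ := Real.sqrt 2 * (R + 1) with hC1
  have hC1one : (1:ℝ) ≤ C1 := by
    have := one_le_sqrt2
    have h1 : (1:ℝ) ≤ (R:ℝ) + 1 := by
      have : (0:ℝ) ≤ (R:ℝ) := Nat.cast_nonneg R
      linarith
    nlinarith
  set e : ℝ := 2 - (1+τ) * s with he_def
  have he : e < -2 := by rw [he_def]; linarith
  -- the covering sets
  set t : ℕ → GaussianInt × GaussianInt → Set ℂ := fun N p =>
    if (N:ℝ) ≤ gnorm p.1 ∧ gnorm p.2 ≤ C1 * gnorm p.1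
    then Metric.closedBall (toComplex p.2 / toComplex p.1)
      (Real.sqrt 2 * gnorm p.1 ^ (-(1+τ)))
    else ∅ with ht_def
  set rad : ℕ → ℝ≥0∞ := fun N => ENNReal.ofReal (2 * Real.sqrt 2 * (N:ℝ) ^ (-(1+τ)))
    with hrad_def
  have hrad : Tendsto rad atTop (𝓝 0) := by
    have h1 : Tendsto (fun N : ℕ => (N:ℝ) ^ (-(1+τ))) atTop (𝓝 0) :=
      (tendsto_rpow_neg_atTop (by linarith)).comp tendsto_natCast_atTop_atTop
    have h2 : Tendsto (fun N : ℕ => 2 * Real.sqrt 2 * (N:ℝ) ^ (-(1+τ))) atTop (𝓝 0) := by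
      simpa using h1.const_mul (2 * Real.sqrt 2)
    have h3 := (ENNReal.continuous_ofReal.tendsto 0).comp h2
    rw [ENNReal.ofReal_zero] at h3
    exact h3
  have hdiam : ∀ᶠ N in atTop, ∀ p : GaussianInt × GaussianInt,
      Metric.ediam (t N p) ≤ rad N := by
    filter_upwards [eventually_ge_atTop 1] with N hN p
    simp only [ht_def]
    by_cases hc : (N:ℝ) ≤ gnorm p.1 ∧ gnorm p.2 ≤ C1 * gnorm p.1
    · rw [if_pos hc]
      set c := toComplex p.2 / toComplex p.1
      set ρ := Real.sqrt 2 * gnorm p.1 ^ (-(1+τ)) with hρ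
      have hNpos : (0:ℝ) < N := by exact_mod_cast hN
      have hq1 : (1:ℝ) ≤ gnorm p.1 := le_trans (by exact_mod_cast hN) hc.1
      have hdle : Metric.ediam (Metric.closedBall c ρ) ≤ ENNReal.ofReal (2 * ρ) := by
        refine Metric.ediam_le_of_forall_dist_le ?_
        intro a ha b hb
        rw [Metric.mem_closedBall] at ha hb
        calc dist a b ≤ dist a c + dist c b := dist_triangle _ _ _
          _ ≤ ρ + ρ := add_le_add ha (by rwa [dist_comm])
          _ = 2 * ρ := by ring
      refine le_trans hdle (ENNReal.ofReal_le_ofReal ?_)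
      have : gnorm p.1 ^ (-(1+τ)) ≤ (N:ℝ) ^ (-(1+τ)) :=
        Real.rpow_le_rpow_of_nonpos hNpos hc.1 (by linarith)
      nlinarith [sqrt2_pos]
    · rw [if_neg hc]; simp
  have hcover : ∀ᶠ N in atTop,
      ({x : ℂ | (Sx τ x).Infinite} ∩ Metric.closedBall 0 R) ⊆ ⋃ p, t N p := by
    filter_upwards [eventually_ge_atTop 1] with N hN x hx
    obtain ⟨hxE, hxB⟩ := hx
    obtain ⟨p, hpS, hpN⟩ := exists_large_q hτ0 hxE (N:ℝ)
    have hq1 : (1:ℝ) ≤ gnorm p.1 := le_trans (by exact_mod_cast hN) hpN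
    obtain ⟨hr, hd⟩ := pair_bound hτ0 hpS hq1
    have hxR : ‖x‖ ≤ (R:ℝ) := by
      rw [Metric.mem_closedBall, Complex.dist_eq, sub_zero] at hxB
      exact hxB
    refine Set.mem_iUnion.mpr ⟨p, ?_⟩
    simp only [ht_def]
    have hcond : (N:ℝ) ≤ gnorm p.1 ∧ gnorm p.2 ≤ C1 * gnorm p.1 := by
      refine ⟨hpN, le_trans hr ?_⟩
      rw [hC1]
      nlinarith [mul_nonneg (mul_nonneg (le_of_lt sqrt2_pos) (sub_nonneg.mpr hxR))
        (gnorm_nonneg p.1)]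
    rw [if_pos hcond]
    exact Metric.mem_closedBall.mpr hd
  have hμ := Measure.hausdorffMeasure_le_liminf_tsum s
    ({x : ℂ | (Sx τ x).Infinite} ∩ Metric.closedBall 0 (R:ℝ)) rad hrad t hdiam hcover
  -- now bound the liminf
  set C2 : ℝ≥0∞ := ENNReal.ofReal (25 * C1 ^ 2 * (2 * Real.sqrt 2) ^ s) with hC2
  set U : ℕ → ℝ≥0∞ := fun N =>
    ∑' q : GaussianInt, (if (N:ℝ) ≤ gnorm q then ENNReal.ofReal (gnorm q ^ e) else 0)
    with hU_def
  have hTU : ∀ᶠ N in atTop,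
      (∑' p : GaussianInt × GaussianInt, Metric.ediam (t N p) ^ s) ≤ C2 * U N := by
    filter_upwards [eventually_ge_atTop 1] with N hN
    have hN1 : (1:ℝ) ≤ (N:ℝ) := by exact_mod_cast hN
    set F : GaussianInt × GaussianInt → ℝ≥0∞ := fun p =>
      if (N:ℝ) ≤ gnorm p.1 ∧ gnorm p.2 ≤ C1 * gnorm p.1
      then ENNReal.ofReal ((2 * Real.sqrt 2) ^ s * gnorm p.1 ^ (-(1+τ)*s)) else 0
      with hF_def
    have hpt : ∀ p, Metric.ediam (t N p) ^ s ≤ F p := by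
      intro p
      simp only [ht_def, hF_def]
      by_cases hc : (N:ℝ) ≤ gnorm p.1 ∧ gnorm p.2 ≤ C1 * gnorm p.1
      · rw [if_pos hc, if_pos hc]
        have hq1 : (1:ℝ) ≤ gnorm p.1 := le_trans hN1 hc.1
        have hqpos : (0:ℝ) < gnorm p.1 := lt_of_lt_of_le one_pos hq1
        have hrp : (0:ℝ) < gnorm p.1 ^ (-(1+τ)) := Real.rpow_pos_of_pos hqpos _
        have hρpos : (0:ℝ) < 2 * (Real.sqrt 2 * gnorm p.1 ^ (-(1+τ))) := by
          have := sqrt2_pos; positivity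
        refine le_trans (ENNReal.rpow_le_rpow (ediam_closedBall_le _ _) hs0.le) ?_
        rw [ENNReal.ofReal_rpow_of_pos hρpos]
        refine ENNReal.ofReal_le_ofReal (le_of_eq ?_)
        rw [show 2 * (Real.sqrt 2 * gnorm p.1 ^ (-(1+τ)))
            = (2 * Real.sqrt 2) * gnorm p.1 ^ (-(1+τ)) from by ring,
          Real.mul_rpow (by positivity) hrp.le, ← Real.rpow_mul (gnorm_nonneg p.1)]
      · rw [if_neg hc, if_neg hc, Metric.ediam_empty, ENNReal.zero_rpow_of_pos hs0]
    have hinner : ∀ q : GaussianInt, (∑' r : GaussianInt, F (q, r))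
        ≤ C2 * (if (N:ℝ) ≤ gnorm q then ENNReal.ofReal (gnorm q ^ e) else 0) := by
      intro q
      by_cases hq : (N:ℝ) ≤ gnorm q
      · rw [if_pos hq]
        have hq1 : (1:ℝ) ≤ gnorm q := le_trans hN1 hq
        have hqpos : (0:ℝ) < gnorm q := lt_of_lt_of_le one_pos hq1
        have hK1 : (1:ℝ) ≤ C1 * gnorm q := by nlinarith
        set c_q : ℝ≥0∞ := ENNReal.ofReal ((2 * Real.sqrt 2) ^ s * gnorm q ^ (-(1+τ)*s))
          with hcq
        have hvan : ∀ r ∉ (box_finite (C1 * gnorm q)).toFinset, F (q, r) = 0 := by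
          intro r hr
          simp only [hF_def]
          refine if_neg fun hcon => hr ?_
          rw [Set.Finite.mem_toFinset]
          exact hcon.2
        rw [tsum_eq_sum hvan]
        have hterm : ∀ r ∈ (box_finite (C1 * gnorm q)).toFinset, F (q, r) ≤ c_q := by
          intro r _
          simp only [hF_def]
          by_cases hcon : (N:ℝ) ≤ gnorm q ∧ gnorm r ≤ C1 * gnorm q
          · rw [if_pos hcon]
          · rw [if_neg hcon]; exact zero_le
        refine le_trans (Finset.sum_le_card_nsmul _ _ _ hterm) ?_
        rw [nsmul_eq_mul, ← ENNReal.ofReal_natCast]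
        have hcard := box_card (C1 * gnorm q) hK1
        have hs2nn : (0:ℝ) ≤ 2 * Real.sqrt 2 := by nlinarith [sqrt2_pos]
        have hcqnn : (0:ℝ) ≤ (2 * Real.sqrt 2) ^ s * gnorm q ^ (-(1+τ)*s) :=
          mul_nonneg (Real.rpow_nonneg hs2nn s) (Real.rpow_nonneg (gnorm_nonneg q) _)
        have hC2nn : (0:ℝ) ≤ 25 * C1 ^ 2 * (2 * Real.sqrt 2) ^ s :=
          mul_nonneg (mul_nonneg (by norm_num) (sq_nonneg C1)) (Real.rpow_nonneg hs2nn s)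
        rw [hcq, ← ENNReal.ofReal_mul (Nat.cast_nonneg _), hC2, ← ENNReal.ofReal_mul hC2nn]
        refine ENNReal.ofReal_le_ofReal ?_
        have hgq : gnorm q ^ 2 * gnorm q ^ (-(1+τ)*s) = gnorm q ^ e := by
          rw [← Real.rpow_natCast (gnorm q) 2, ← Real.rpow_add hqpos]
          congr 1
          rw [he_def]; push_cast; ring
        calc ((box_finite (C1 * gnorm q)).toFinset.card : ℝ)
              * ((2 * Real.sqrt 2) ^ s * gnorm q ^ (-(1+τ)*s))
            ≤ 25 * (C1 * gnorm q) ^ 2 * ((2 * Real.sqrt 2) ^ s * gnorm q ^ (-(1+τ)*s)) := by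
              refine mul_le_mul_of_nonneg_right hcard hcqnn
          _ = 25 * C1 ^ 2 * (2 * Real.sqrt 2) ^ s * (gnorm q ^ 2 * gnorm q ^ (-(1+τ)*s)) := by
              ring
          _ = 25 * C1 ^ 2 * (2 * Real.sqrt 2) ^ s * gnorm q ^ e := by rw [hgq]
      · rw [if_neg hq]
        have : ∀ r : GaussianInt, F (q, r) = 0 := by
          intro r
          simp only [hF_def]
          exact if_neg fun hcon => hq hcon.1
        rw [tsum_congr this, tsum_zero, mul_zero]
    calc (∑' p : GaussianInt × GaussianInt, Metric.ediam (t N p) ^ s)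
        ≤ ∑' p : GaussianInt × GaussianInt, F p := ENNReal.tsum_le_tsum hpt
      _ = ∑' q : GaussianInt, ∑' r : GaussianInt, F (q, r) :=
          ENNReal.tsum_prod (f := fun a b => F (a, b))
      _ ≤ ∑' q : GaussianInt,
            C2 * (if (N:ℝ) ≤ gnorm q then ENNReal.ofReal (gnorm q ^ e) else 0) :=
          ENNReal.tsum_le_tsum hinner
      _ = C2 * U N := by rw [ENNReal.tsum_mul_left, hU_def]
  have hUtend : Tendsto U atTop (𝓝 0) := by
    set g : GaussianInt → ℝ≥0∞ := fun q =>
      if 1 ≤ gnorm q then ENNReal.ofReal (gnorm q ^ e) else 0 with hg_def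
    have hg : ∑' q, g q ≠ ∞ := key_sum he
    have hmap : Tendsto (fun n : ℕ => (box_finite (n:ℝ)).toFinset) atTop atTop := by
      rw [tendsto_atTop_atTop]
      intro F
      refine ⟨F.sup fun z => ⌈gnorm z⌉₊, fun a ha => ?_⟩
      intro z hz
      have h1 : ⌈gnorm z⌉₊ ≤ a := le_trans (Finset.le_sup (f := fun z => ⌈gnorm z⌉₊) hz) ha
      have h2 : gnorm z ≤ (a:ℝ) := le_trans (Nat.le_ceil _) (by exact_mod_cast h1)
      simp only [Set.Finite.mem_toFinset, Set.mem_setOf_eq]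
      exact h2
    have hcomp := (ENNReal.tendsto_tsum_compl_atTop_zero hg).comp hmap
    have hle : ∀ N : ℕ, U (N + 1) ≤ ∑' x : {x // x ∉ (box_finite ((N:ℕ):ℝ)).toFinset}, g x := by
      intro N
      refine le_trans ?_ (le_of_eq (tsum_subtype
        (s := {x : GaussianInt | x ∉ (box_finite ((N:ℕ):ℝ)).toFinset}) (f := g)).symm)
      refine ENNReal.tsum_le_tsum fun q => ?_
      by_cases hc : ((N+1 : ℕ):ℝ) ≤ gnorm q
      · rw [if_pos hc]
        have hq1 : (1:ℝ) ≤ gnorm q := by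
          refine le_trans ?_ hc
          exact_mod_cast Nat.one_le_iff_ne_zero.mpr (Nat.succ_ne_zero N)
        have hqN : q ∉ (box_finite ((N:ℕ):ℝ)).toFinset := by
          simp only [Set.Finite.mem_toFinset, Set.mem_setOf_eq]
          push_cast at hc
          intro hcon
          linarith
        rw [Set.indicator_of_mem (by exact hqN) g, hg_def]
        simp only [if_pos hq1]
        exact le_refl _
      · rw [if_neg hc]; exact zero_le
    have hsq : Tendsto (fun N : ℕ => U (N + 1)) atTop (𝓝 0) :=
      tendsto_of_tendsto_of_tendsto_of_le_of_le tendsto_const_nhds hcomp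
        (fun n => zero_le) hle
    exact (tendsto_add_atTop_iff_nat 1).mp hsq
  have hlim : liminf (fun N => ∑' p : GaussianInt × GaussianInt,
      Metric.ediam (t N p) ^ s) atTop ≤ 0 := by
    refine le_trans (liminf_le_liminf hTU) ?_
    have : Tendsto (fun N => C2 * U N) atTop (𝓝 (C2 * 0)) :=
      ENNReal.Tendsto.const_mul hUtend (Or.inr ENNReal.ofReal_ne_top)
    rw [mul_zero] at this
    exact le_of_eq this.liminf_eq
  exact le_antisymm (le_trans hμ hlim) zero_le


theorem stmt16 (τ : ℝ) (hτ : 1 < τ) :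
    dimH {x : ℂ | {p : GaussianInt × GaussianInt |
        snorm2 (toComplex p.1 * x - toComplex p.2) ≤ gnorm p.1 ^ (-τ)}.Infinite} ≤
      ENNReal.ofReal (min (4 / (1 + τ)) 2) := by
  have hmin : min (4 / (1 + τ)) 2 = 4 / (1 + τ) :=
    min_eq_left (by rw [div_le_iff₀ (by linarith)]; linarith)
  rw [hmin]
  have hE : {x : ℂ | {p : GaussianInt × GaussianInt |
      snorm2 (toComplex p.1 * x - toComplex p.2) ≤ gnorm p.1 ^ (-τ)}.Infinite}
      = {x : ℂ | (Sx τ x).Infinite} := rfl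
  rw [hE]
  have hsub : {x : ℂ | (Sx τ x).Infinite} ⊆
      ⋃ n : ℕ, ({x : ℂ | (Sx τ x).Infinite} ∩ Metric.closedBall 0 (n:ℝ)) := by
    intro x hx
    obtain ⟨n, hn⟩ := exists_nat_ge (‖x‖)
    exact Set.mem_iUnion.mpr ⟨n, hx, by
      rwa [Metric.mem_closedBall, Complex.dist_eq, sub_zero]⟩
  refine le_trans (dimH_mono hsub) ?_
  rw [dimH_iUnion]
  refine iSup_le fun n => ?_
  refine dimH_le fun d' hd' => ?_
  by_contra hlt
  push_neg at hlt
  have hpos : (0:ℝ) < 4 / (1+τ) := div_pos (by norm_num) (by linarith)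
  have hlt' : 4 / (1+τ) < (d' : ℝ) := by
    rw [← ENNReal.ofReal_coe_nnreal] at hlt
    exact (ENNReal.ofReal_lt_ofReal_iff_of_nonneg hpos.le).mp hlt
  have hs4 : 4 < (1+τ) * (d' : ℝ) := by
    rw [div_lt_iff₀ (by linarith)] at hlt'
    linarith
  have hs0 : (0:ℝ) < (d' : ℝ) := lt_trans hpos hlt'
  have hzero := main_zero hτ hs4 hs0 n
  rw [hd'] at hzero
  exact ENNReal.top_ne_zero hzero
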